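/- Let $Y_1,\dots,Y_N$ be independent and identically distributed real-valued random variables with common law $\mu$. For any $\epsilon \in (0,1)$ and $\beta \in (0,1)$, if $N \ge \log \beta / \log(1-\epsilon)$, then with probability at least $1-\beta$ (over the draw of the samples) the random threshold $\max_{1\le i\le N} Y_i$ satisfies $\mu\big((-\infty, \max_{1\le i\le N} Y_i]\big) \ge 1-\epsilon$; i.e. $\mathbb{P}\{\omega : \mu((-\infty, \max_i Y_i(\omega)]) \ge 1-\epsilon\} \ge 1-\beta$. -/

import Mathlib

open MeasureTheory ProbabilityTheory

/-- **Lemma 1 (Theorem 8.1 in Tempo et al.)**: for i.i.d. real samples `Y 1, ..., Y N` with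
common law `μ`, if `N ≥ log β / log (1 - ε)` then with probability at least `1 - β` the random
threshold `max_i Y i` satisfies `μ (-∞, max_i Y i] ≥ 1 - ε`. -/
theorem max_sample_quantile_bound
    {Ω : Type*} [MeasurableSpace Ω] (P : Measure Ω) [IsProbabilityMeasure P]
    (N : ℕ) (Y : Fin N → Ω → ℝ) (μ : Measure ℝ) [IsProbabilityMeasure μ]
    (hmeas : ∀ i, Measurable (Y i))
    (hindep : iIndepFun Y P)
    (hlaw : ∀ i, Measure.map (Y i) P = μ)
    (ε β : ℝ) (hε : ε ∈ Set.Ioo (0 : ℝ) 1) (hβ : β ∈ Set.Ioo (0 : ℝ) 1)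
    (hN : Real.log β / Real.log (1 - ε) ≤ (N : ℝ)) :
    ENNReal.ofReal (1 - β) ≤
      P {ω | ENNReal.ofReal (1 - ε) ≤ μ (Set.Iic (⨆ i, Y i ω))} := by
  obtain ⟨hε0, hε1⟩ := hε
  obtain ⟨hβ0, hβ1⟩ := hβ
  have h1ε : (0:ℝ) < 1 - ε := by linarith
  set F := ProbabilityTheory.cdf μ with hF
  have hmono : Monotone F := ProbabilityTheory.monotone_cdf μ
  set S : Set ℝ := {x | 1 - ε ≤ F x} with hS
  have hSne : S.Nonempty := by
    have h := (ProbabilityTheory.tendsto_cdf_atTop μ).eventually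
      (eventually_gt_nhds (show 1 - ε < 1 by linarith))
    obtain ⟨x, hx⟩ := h.exists
    exact ⟨x, hx.le⟩
  have hSbd : BddBelow S := by
    have h := (ProbabilityTheory.tendsto_cdf_atBot μ).eventually
      (eventually_lt_nhds h1ε)
    obtain ⟨x0, hx0⟩ := h.exists
    refine ⟨x0, fun y hy => ?_⟩
    by_contra hcon
    push_neg at hcon
    exact absurd (hy.trans (hmono hcon.le)) (not_le.2 hx0)
  set t := sInf S with ht
  have htS : 1 - ε ≤ F t := by
    have hright : Filter.Tendsto F (nhdsWithin t (Set.Ioi t)) (nhds (F t)) :=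
      ((ProbabilityTheory.cdf μ).right_continuous t).tendsto.mono_left
        (nhdsWithin_mono _ Set.Ioi_subset_Ici_self)
    refine ge_of_tendsto hright ?_
    filter_upwards [self_mem_nhdsWithin] with x hx
    obtain ⟨y, hyS, hyx⟩ := (csInf_lt_iff hSbd hSne).1 hx
    exact hyS.trans (hmono hyx.le)
  -- measure of Iio t is at most 1 - ε
  have hIio : μ (Set.Iio t) ≤ ENNReal.ofReal (1 - ε) := by
    have hunion : Set.Iio t = ⋃ n : ℕ, Set.Iic (t - ((n:ℝ)+1)⁻¹) := by
      ext x
      simp only [Set.mem_Iio, Set.mem_iUnion, Set.mem_Iic]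
      constructor
      · intro hx
        obtain ⟨n, hn⟩ := exists_nat_one_div_lt (show 0 < t - x by linarith)
        rw [one_div] at hn
        exact ⟨n, by linarith⟩
      · rintro ⟨n, hn⟩
        have hpos : (0:ℝ) < ((n:ℝ)+1)⁻¹ := by positivity
        linarith
    have hdir : Directed (· ⊆ ·) (fun n : ℕ => Set.Iic (t - ((n:ℝ)+1)⁻¹)) := by
      refine Monotone.directed_le fun a b hab => Set.Iic_subset_Iic.2 ?_
      have : ((b:ℝ)+1)⁻¹ ≤ ((a:ℝ)+1)⁻¹ := by
        have : (a:ℝ) ≤ b := by exact_mod_cast hab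
        gcongr
      linarith
    rw [hunion, Directed.measure_iUnion hdir]
    refine iSup_le fun n => ?_
    have hposn : (0:ℝ) < ((n:ℝ)+1)⁻¹ := by positivity
    have hlt : t - ((n:ℝ)+1)⁻¹ < t := by linarith
    have hnot : ¬ (1 - ε ≤ F (t - ((n:ℝ)+1)⁻¹)) := fun h =>
      absurd (csInf_le hSbd h) (not_le.2 hlt)
    rw [← ProbabilityTheory.ofReal_cdf μ]
    exact ENNReal.ofReal_le_ofReal (le_of_not_ge hnot)
  -- power bound
  have hpow : (1 - ε) ^ N ≤ β := by
    have hlogneg : Real.log (1 - ε) < 0 := Real.log_neg h1ε (by linarith)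
    have h1 : (N:ℝ) * Real.log (1 - ε) ≤ Real.log β := (div_le_iff_of_neg hlogneg).1 hN
    have h2 : Real.log ((1 - ε) ^ N) ≤ Real.log β := by rw [Real.log_pow]; exact_mod_cast h1
    exact (Real.log_le_log_iff (pow_pos h1ε N) hβ0).1 h2
  -- the bad event
  set C : Set Ω := ⋂ i, Y i ⁻¹' Set.Iio t with hC
  have hCmeas : MeasurableSet C :=
    MeasurableSet.iInter fun i => (hmeas i) measurableSet_Iio
  have hPC : P C ≤ ENNReal.ofReal β := by
    have hprod : P C = ∏ i : Fin N, P (Y i ⁻¹' Set.Iio t) :=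
      hindep.meas_iInter (fun i => ⟨Set.Iio t, measurableSet_Iio, rfl⟩)
    have heach : ∀ i : Fin N, P (Y i ⁻¹' Set.Iio t) = μ (Set.Iio t) := fun i => by
      rw [← hlaw i, Measure.map_apply (hmeas i) measurableSet_Iio]
    calc P C = μ (Set.Iio t) ^ N := by
          rw [hprod]
          simp [heach, Finset.prod_const, Finset.card_univ]
      _ ≤ ENNReal.ofReal (1 - ε) ^ N := pow_le_pow_left' hIio N
      _ = ENNReal.ofReal ((1 - ε) ^ N) := by
          rw [ENNReal.ofReal_pow h1ε.le]
      _ ≤ ENNReal.ofReal β := ENNReal.ofReal_le_ofReal hpow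
  have hsub : Cᶜ ⊆ {ω | ENNReal.ofReal (1 - ε) ≤ μ (Set.Iic (⨆ i, Y i ω))} := by
    intro ω hω
    simp only [hC, Set.compl_iInter, Set.mem_iUnion, Set.mem_compl_iff, Set.mem_preimage,
      Set.mem_Iio, not_lt] at hω
    obtain ⟨i, hi⟩ := hω
    have hsup : t ≤ ⨆ j, Y j ω :=
      hi.trans (le_ciSup (Set.finite_range fun j => Y j ω).bddAbove i)
    have h1 : ENNReal.ofReal (1 - ε) ≤ μ (Set.Iic t) := by
      rw [← ProbabilityTheory.ofReal_cdf μ]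
      exact ENNReal.ofReal_le_ofReal htS
    exact h1.trans (measure_mono (Set.Iic_subset_Iic.2 hsup))
  calc ENNReal.ofReal (1 - β) = 1 - ENNReal.ofReal β := by
        rw [ENNReal.ofReal_sub _ hβ0.le, ENNReal.ofReal_one]
    _ ≤ 1 - P C := tsub_le_tsub_left hPC 1
    _ = P Cᶜ := (prob_compl_eq_one_sub hCmeas).symm
    _ ≤ P _ := measure_mono hsub
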